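/- For every i ∈ {1,...,n} with SA[i] > 1, it holds that SA^{-1}[SA[i]−1] = C(BWT[i]) + rank_{BWT[i]}(i); that is, the last-to-first mapping LF(i) equals the number of text positions holding a character smaller than BWT[i], plus the number of occurrences of BWT[i] in BWT[1..i]. -/
import Mathlib


variable {α : Type*} [LinearOrder α]

/-- The suffix `T[p..n]` of a 1-indexed string `T[1..n]`, as a list. -/
def sfx (T : ℕ → α) (n p : ℕ) : List α :=
  (List.range (n + 1 - p)).map (fun d => T (p + d))

/-- The Burrows–Wheeler transform determined by the text `T`, its suffix array `SA`,
and the end-of-string character `dollar`:  `BWT[i] = T[SA[i]-1]` if `SA[i] > 1`,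
and `BWT[i] = $` if `SA[i] = 1`. -/
def bwt (T : ℕ → α) (SA : ℕ → ℕ) (dollar : α) (i : ℕ) : α :=
  if SA i = 1 then dollar else T (SA i - 1)

lemma sfx_cons (T : ℕ → α) {n p : ℕ} (h : p ≤ n) :
    sfx T n p = T p :: sfx T n (p + 1) := by
  unfold sfx
  have h1 : n + 1 - p = (n - p) + 1 := by omega
  have h2 : n + 1 - (p + 1) = n - p := by omega
  rw [h1, h2, List.range_succ_eq_map, List.map_cons, List.map_map]
  simp only [Nat.add_zero]
  congr 1
  apply List.map_congr_left
  intro d _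
  simp only [Function.comp_apply]
  congr 1
  omega

lemma cons_le_head {a b : α} {l l' : List α} (h : (a::l) ≤ (b::l')) : a ≤ b := by
  rcases h.lt_or_eq with h | h
  · exact List.head_le_of_lt h
  · simp_all

lemma cons_le_tail {a : α} {l l' : List α} (h : (a::l) ≤ (a::l')) : l ≤ l' := by
  by_contra hc
  exact absurd h (not_le.2 (List.Lex.cons (not_le.1 hc)))

/-- For every `i` with `SA[i] > 1`,
`LF(i) = ISA[SA[i]-1] = C(BWT[i]) + rank_{BWT[i]}(i)`, where `C(c)` is the number of
text positions holding a character smaller than `c` and `rank_c(i)` is the number of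
occurrences of `c` in `BWT[1..i]`. -/
theorem statement10
    (n : ℕ) (T : ℕ → α) (dollar : α) (SA : ℕ → ℕ)
    -- `T[1..n]` is a string of length `n ≥ 1` ending with `$`,
    -- which is smaller than every other character and occurs only at position `n`
    (hn : 1 ≤ n) (hTn : T n = dollar)
    (hdollar : ∀ p, 1 ≤ p → p < n → dollar < T p)
    -- `SA` is a permutation of `{1,...,n}` sorting the suffixes lexicographically
    (hSAran : ∀ i, 1 ≤ i → i ≤ n → 1 ≤ SA i ∧ SA i ≤ n)
    (hSAsurj : ∀ p, 1 ≤ p → p ≤ n → ∃ i, 1 ≤ i ∧ i ≤ n ∧ SA i = p)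
    (hSAmono : ∀ i j, 1 ≤ i → i < j → j ≤ n → sfx T n (SA i) < sfx T n (SA j))
    -- `ISA` is the inverse permutation of `SA`
    (ISA : ℕ → ℕ)
    (hISA : ∀ i, 1 ≤ i → i ≤ n → ISA (SA i) = i)
    (hISAran : ∀ p, 1 ≤ p → p ≤ n → 1 ≤ ISA p ∧ ISA p ≤ n ∧ SA (ISA p) = p)
    : ∀ i, 1 ≤ i → i ≤ n → 1 < SA i →
      ISA (SA i - 1) =
        ((Finset.Icc 1 n).filter (fun p => T p < bwt T SA dollar i)).card +
        ((Finset.Icc 1 i).filter (fun p => bwt T SA dollar p = bwt T SA dollar i)).card := by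
  intro i hi1 hin hSAi
  -- generic key fact: order of ranks matches order of suffixes
  have key : ∀ q k, 1 ≤ q → q ≤ n → 1 ≤ k → k ≤ n →
      (sfx T n (SA q) ≤ sfx T n (SA k) ↔ q ≤ k) := by
    intro q k hq1 hqn hk1 hkn
    constructor
    · intro h
      by_contra hc
      exact absurd h (not_le.2 (hSAmono k q hk1 (by omega) hqn))
    · intro h
      rcases eq_or_lt_of_le h with h | h
      · subst h; exact le_rfl
      · exact (hSAmono q k hq1 h hkn).le
  set c : α := bwt T SA dollar i with hc
  have hSAine : SA i ≠ 1 := by omega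
  have hcT : c = T (SA i - 1) := by rw [hc, bwt, if_neg hSAine]
  set P : ℕ := SA i - 1 with hPdef
  have hP1 : 1 ≤ P := by omega
  have hPn : P < n := by have := (hSAran i hi1 hin).2; omega
  have hPsucc : P + 1 = SA i := by omega
  have hcd : dollar < c := hcT ▸ hdollar P hP1 hPn
  obtain ⟨hj1, hjn, hSAj⟩ := hISAran P hP1 hPn.le
  set j : ℕ := ISA P with hjdef
  -- Step 1: j = #{q ∈ [1,n] : sfx (SA q) ≤ sfx P}
  have h1 : j = ((Finset.Icc 1 n).filter
      (fun q => sfx T n (SA q) ≤ sfx T n P)).card := by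
    have : (Finset.Icc 1 n).filter (fun q => sfx T n (SA q) ≤ sfx T n P)
        = Finset.Icc 1 j := by
      ext q
      simp only [Finset.mem_filter, Finset.mem_Icc]
      constructor
      · rintro ⟨⟨hq1, hqn⟩, h⟩
        rw [← hSAj] at h
        exact ⟨hq1, (key q j hq1 hqn hj1 hjn).1 h⟩
      · rintro ⟨hq1, hqj⟩
        refine ⟨⟨hq1, by omega⟩, ?_⟩
        rw [← hSAj]
        exact (key q j hq1 (by omega) hj1 hjn).2 hqj
    rw [this, Nat.card_Icc]
    omega
  -- Step 2: reindex by SA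
  have h2 : ((Finset.Icc 1 n).filter (fun q => sfx T n (SA q) ≤ sfx T n P)).card
      = ((Finset.Icc 1 n).filter (fun p => sfx T n p ≤ sfx T n P)).card := by
    apply Finset.card_bij' (fun q _ => SA q) (fun p _ => ISA p)
    · intro q hq
      simp only [Finset.mem_filter, Finset.mem_Icc] at hq ⊢
      exact ⟨hSAran q hq.1.1 hq.1.2, hq.2⟩
    · intro p hp
      simp only [Finset.mem_filter, Finset.mem_Icc] at hp ⊢
      obtain ⟨h1', h2', h3'⟩ := hISAran p hp.1.1 hp.1.2
      exact ⟨⟨h1', h2'⟩, by rw [h3']; exact hp.2⟩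
    · intro q hq
      simp only [Finset.mem_filter, Finset.mem_Icc] at hq
      exact hISA q hq.1.1 hq.1.2
    · intro p hp
      simp only [Finset.mem_filter, Finset.mem_Icc] at hp
      exact (hISAran p hp.1.1 hp.1.2).2.2
  -- Step 3: split by head character
  have hTP : T P = c := hcT.symm
  have h3 : ∀ p, 1 ≤ p → p ≤ n →
      (sfx T n p ≤ sfx T n P ↔
        T p < c ∨ (T p = c ∧ sfx T n (p + 1) ≤ sfx T n (P + 1))) := by
    intro p hp1 hpn
    rw [sfx_cons T hpn, sfx_cons T hPn.le, hTP]
    constructor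
    · intro h
      rcases lt_trichotomy (T p) c with h' | h' | h'
      · exact Or.inl h'
      · exact Or.inr ⟨h', by rw [← h'] at h; exact cons_le_tail h⟩
      · exact absurd (cons_le_head h) (not_le.2 h')
    · rintro (h | ⟨h, h'⟩)
      · exact le_of_lt (List.Lex.rel h)
      · rw [h]; exact List.cons_le_cons c h'
  have h4 : ((Finset.Icc 1 n).filter (fun p => sfx T n p ≤ sfx T n P)).card
      = ((Finset.Icc 1 n).filter (fun p => T p < c)).card +
        ((Finset.Icc 1 n).filter
          (fun p => T p = c ∧ sfx T n (p + 1) ≤ sfx T n (P + 1))).card := by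
    have hsplit : (Finset.Icc 1 n).filter (fun p => sfx T n p ≤ sfx T n P)
        = (Finset.Icc 1 n).filter (fun p => T p < c) ∪
          (Finset.Icc 1 n).filter
            (fun p => T p = c ∧ sfx T n (p + 1) ≤ sfx T n (P + 1)) := by
      rw [← Finset.filter_or]
      apply Finset.filter_congr
      intro p hp
      rw [Finset.mem_Icc] at hp
      exact h3 p hp.1 hp.2
    rw [hsplit]
    apply Finset.card_union_of_disjoint
    rw [Finset.disjoint_left]
    intro p hp1 hp2
    simp only [Finset.mem_filter] at hp1 hp2
    exact absurd hp2.2.1 (ne_of_lt hp1.2)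
  -- Step 4: second summand equals rank
  have h5 : ((Finset.Icc 1 n).filter
        (fun p => T p = c ∧ sfx T n (p + 1) ≤ sfx T n (P + 1))).card
      = ((Finset.Icc 1 i).filter (fun q => bwt T SA dollar q = c)).card := by
    symm
    apply Finset.card_bij' (fun q _ => SA q - 1) (fun p _ => ISA (p + 1))
    · intro q hq
      simp only [Finset.mem_filter, Finset.mem_Icc] at hq ⊢
      obtain ⟨⟨hq1, hqi⟩, hbq⟩ := hq
      have hqn : q ≤ n := le_trans hqi hin
      have hSAq1 : SA q ≠ 1 := by
        intro h
        rw [bwt, if_pos h] at hbq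
        exact absurd hbq (ne_of_lt hcd)
      rw [bwt, if_neg hSAq1] at hbq
      have hran := hSAran q hq1 hqn
      have hs : SA q - 1 + 1 = SA q := by omega
      refine ⟨⟨by omega, by omega⟩, hbq, ?_⟩
      rw [hs, hPsucc]
      exact (key q i hq1 hqn hi1 hin).2 hqi
    · intro p hp
      simp only [Finset.mem_filter, Finset.mem_Icc] at hp ⊢
      obtain ⟨⟨hp1, hpn'⟩, hTp, hsle⟩ := hp
      have hpne : p ≠ n := by
        intro h; rw [h, hTn] at hTp; exact absurd hTp (ne_of_lt hcd)
      have hp1n : 1 ≤ p + 1 ∧ p + 1 ≤ n := ⟨by omega, by omega⟩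
      obtain ⟨hI1, hIn, hSI⟩ := hISAran (p + 1) hp1n.1 hp1n.2
      have hbw : bwt T SA dollar (ISA (p + 1)) = c := by
        rw [bwt, if_neg (by omega), hSI]
        simpa using hTp
      refine ⟨⟨hI1, ?_⟩, hbw⟩
      have := (key (ISA (p + 1)) i hI1 hIn hi1 hin).1
      apply this
      rw [hSI]
      rw [hPsucc] at hsle
      exact hsle
    · intro q hq
      simp only [Finset.mem_filter, Finset.mem_Icc] at hq
      obtain ⟨⟨hq1, hqi⟩, hbq⟩ := hq
      have hSAq1 : SA q ≠ 1 := by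
        intro h
        rw [bwt, if_pos h] at hbq
        exact absurd hbq (ne_of_lt hcd)
      have hran := hSAran q hq1 (le_trans hqi hin)
      have hs : SA q - 1 + 1 = SA q := by omega
      rw [hs]
      exact hISA q hq1 (le_trans hqi hin)
    · intro p hp
      simp only [Finset.mem_filter, Finset.mem_Icc] at hp
      obtain ⟨⟨hp1, hpn'⟩, hTp, _⟩ := hp
      have hpne : p ≠ n := by
        intro h; rw [h, hTn] at hTp; exact absurd hTp (ne_of_lt hcd)
      have := (hISAran (p + 1) (by omega) (by omega)).2.2
      omega
  rw [h1, h2, h4, h5]
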